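/- For every integer m, the function a : SD₁₆ → ℤ determined by the group-ring element (1 + x + x² + x³ + x⁴ + x⁵ + x⁶ − x⁷ + m·h(x)) + y·(1 + x − x⁵ + x⁷ + m·h(x)) with h(x) = (x+1)(x²+1)(x⁴+1) — i.e., a(X^j) equals 1 + m for 0 ≤ j ≤ 6 and −1 + m for j = 7; and a(Y·X^j) equals 1 + m for j ∈ {0,1,7}, −1 + m for j = 5, and m for j ∈ {2,3,4,6} — has integer group determinant D_{SD₁₆}(a) = 2¹¹·(2m + 1). -/

import Mathlib

open SemidirectProduct

instance sdpFintype {N H : Type*} [Group N] [Group H] {φ : H →* MulAut N}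
    [Fintype N] [Fintype H] : Fintype (N ⋊[φ] H) :=
  Fintype.ofEquiv (N × H)
    ⟨fun p => ⟨p.1, p.2⟩, fun g => (g.left, g.right), fun _ => rfl, fun _ => rfl⟩

instance sdpDecEq {N H : Type*} [Group N] [Group H] {φ : H →* MulAut N}
    [DecidableEq N] [DecidableEq H] : DecidableEq (N ⋊[φ] H) := fun a b =>
  decidable_of_iff (a.left = b.left ∧ a.right = b.right)
    (by cases a; cases b; simp [SemidirectProduct.ext_iff])

/-- The integer group determinant of `a : G → ℤ`. -/
def groupDet {G : Type*} [Group G] [Fintype G] [DecidableEq G] (a : G → ℤ) : ℤ :=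
  Matrix.det (Matrix.of fun g h : G => a (g * h⁻¹))

/-- The additive automorphism of `ZMod m` given by multiplication by a self-inverse
element `c`, viewed as a multiplicative automorphism of `Multiplicative (ZMod m)`. -/
def mulBy {m : ℕ} (c : ZMod m) (hc : c * c = 1) :
    MulAut (Multiplicative (ZMod m)) where
  toFun x := Multiplicative.ofAdd (c * x.toAdd)
  invFun x := Multiplicative.ofAdd (c * x.toAdd)
  left_inv x := by simp [← mul_assoc, hc]
  right_inv x := by simp [← mul_assoc, hc]
  map_mul' x y := by simp [mul_add]

lemma mulBy_sq {m : ℕ} (c : ZMod m) (hc : c * c = 1) : (mulBy c hc) ^ 2 = 1 := by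
  ext x
  rw [sq]
  show (mulBy c hc) ((mulBy c hc) x) = x
  simp [mulBy, ← mul_assoc, hc]

/-- The homomorphism from `Multiplicative (ZMod 2)` sending the nontrivial element to a
given element of order dividing 2. -/
def homOfOrderTwo {G : Type*} [Group G] (g : G) (hg : g ^ 2 = 1) :
    Multiplicative (ZMod 2) →* G :=
  MonoidHom.mk' (fun x => g ^ (Multiplicative.toAdd x).val) (by
    intro a b
    show g ^ (Multiplicative.toAdd (a * b)).val =
      g ^ (Multiplicative.toAdd a).val * g ^ (Multiplicative.toAdd b).val
    have h : Multiplicative.toAdd (a * b) = Multiplicative.toAdd a + Multiplicative.toAdd b := rfl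
    rw [← pow_add, h, ZMod.val_add, ← pow_eq_pow_mod _ hg])

/-- The semidihedral group of order 16, realized as `(ZMod 8) ⋊ (ZMod 2)` where the
nontrivial element of `ZMod 2` acts by multiplication by 3. -/
abbrev SD16 : Type :=
  Multiplicative (ZMod 8) ⋊[homOfOrderTwo (mulBy (3 : ZMod 8) (by decide))
    (mulBy_sq _ _)] Multiplicative (ZMod 2)

/-- The generator `X` of order 8 of `SD16`. -/
def SD16.X : SD16 := inl (Multiplicative.ofAdd 1)

/-- The generator `Y` of order 2 of `SD16`. -/
def SD16.Y : SD16 := inr (Multiplicative.ofAdd 1)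


def eFun : Fin 16 → SD16 := fun k =>
  ⟨Multiplicative.ofAdd (((k : ℕ) : ZMod 8)), Multiplicative.ofAdd ((((k : ℕ) / 8 : ℕ) : ZMod 2))⟩

noncomputable def eEq : Fin 16 ≃ SD16 := Equiv.ofBijective eFun (by decide)

def cf (g : SD16) : ℤ :=
  if g.right.toAdd = 0 then ![1,1,1,1,1,1,1,-1] ⟨g.left.toAdd.val, ZMod.val_lt _⟩
  else ![1,0,0,1,0,1,0,-1] ⟨g.left.toAdd.val, ZMod.val_lt _⟩

def Cm : Matrix (Fin 16) (Fin 16) ℤ := Matrix.of fun i j => cf (eFun i * (eFun j)⁻¹)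

def Pm : Matrix (Fin 16) (Fin 16) ℤ :=
  Matrix.of fun i j => if i = 0 then Cm 0 j else Cm i j - Cm 0 j

def Qm : Matrix (Fin 16) (Fin 16) ℤ :=
  Matrix.of fun i j => if i = 0 then (1 : ℤ) else Cm i j - Cm 0 j

def LP : Matrix (Fin 16) (Fin 16) ℤ :=
  !![111633900, 0, 0, 0, 0, 0, 0, 0, 0, 0, 0, 0, 0, 0, 0, 0;
  0, 111633900, 0, 0, 0, 0, 0, 0, 0, 0, 0, 0, 0, 0, 0, 0;
  0, 111633900, 111633900, 0, 0, 0, 0, 0, 0, 0, 0, 0, 0, 0, 0, 0;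
  0, 111633900, 111633900, 111633900, 0, 0, 0, 0, 0, 0, 0, 0, 0, 0, 0, 0;
  0, 111633900, 111633900, 111633900, 111633900, 0, 0, 0, 0, 0, 0, 0, 0, 0, 0, 0;
  0, 111633900, 111633900, 111633900, 111633900, 111633900, 0, 0, 0, 0, 0, 0, 0, 0, 0, 0;
  0, 111633900, 111633900, 111633900, 111633900, 111633900, 111633900, 0, 0, 0, 0, 0, 0, 0, 0, 0;
  -223267800, 0, 111633900, 223267800, 334901700, 446535600, 558169500, 111633900, 0, 0, 0, 0, 0, 0, 0, 0;
  0, 111633900, 55816950, -55816950, -111633900, -167450850, -223267800, -37211300, 111633900, 0, 0, 0, 0, 0, 0, 0;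
  -111633900, 0, 55816950, 111633900, 167450850, 167450850, 111633900, 18605650, 111633900, 111633900, 0, 0, 0, 0, 0, 0;
  -111633900, -55816950, -55816950, -55816950, -55816950, 0, 55816950, 18605650, 111633900, 111633900, 111633900, 0, 0, 0, 0, 0;
  0, 111633900, 111633900, 55816950, -55816950, -111633900, -167450850, -37211300, 27908475, 139542375, 362810175, 111633900, 0, 0, 0, 0;
  -111633900, 0, 0, 55816950, 111633900, 167450850, 167450850, 18605650, 195359325, -27908475, -362810175, -129495324, 111633900, 0, 0, 0;
  0, 55816950, -55816950, -111633900, -167450850, -223267800, -223267800, -37211300, 111633900, 223267800, 223267800, 35722848, 13244700, 111633900, 0, 0;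
  -111633900, 55816950, 111633900, 167450850, 167450850, 111633900, 111633900, 18605650, 195359325, 83725425, -27908475, -58049628, 138123300, 1876200, 111633900, 0;
  -223267800, -55816950, 0, 55816950, 167450850, 279084750, 390718650, 74422600, 27908475, 251176275, 586077975, 183079596, -20813100, 156662700, -77933100, 111633900]

def UP : Matrix (Fin 16) (Fin 16) ℤ :=
  !![223267800, -223267800, 223267800, 223267800, 223267800, 223267800, 223267800, 223267800, 223267800, 223267800, 0, -223267800, 0, 0, 0, 223267800;
  0, 446535600, -446535600, 0, 0, 0, 0, 0, -223267800, -223267800, 223267800, 446535600, 223267800, 0, -223267800, -223267800;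
  0, 0, 446535600, -446535600, 0, 0, 0, 0, 0, -223267800, -223267800, -223267800, -223267800, 223267800, 446535600, 223267800;
  0, 0, 0, 446535600, -446535600, 0, 0, 0, 223267800, 446535600, 223267800, 0, -223267800, -223267800, -223267800, -223267800;
  0, 0, 0, 0, 446535600, -446535600, 0, 0, -223267800, -223267800, -223267800, 223267800, 446535600, 223267800, 0, -223267800;
  0, 0, 0, 0, 0, 446535600, -446535600, 0, 223267800, 0, -223267800, -223267800, -223267800, -223267800, 223267800, 446535600;
  0, 0, 0, 0, 0, 0, 446535600, -446535600, -223267800, 223267800, 446535600, 223267800, 0, -223267800, -223267800, -223267800;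
  0, 0, 0, 0, 0, 0, 0, 2679213600, 446535600, -893071200, -893071200, -893071200, 446535600, 1786142400, 446535600, 446535600;
  0, 0, 0, 0, 0, 0, 0, 0, 148845200, 37211300, 260479100, 148845200, 260479100, 37211300, 148845200, 148845200;
  0, 0, 0, 0, 0, 0, 0, 0, 0, 111633900, -223267800, 111633900, -111633900, 223267800, -111633900, 0;
  0, 0, 0, 0, 0, 0, 0, 0, 0, 0, 111633900, -223267800, 111633900, -111633900, 223267800, -111633900;
  0, 0, 0, 0, 0, 0, 0, 0, 0, 0, 0, 697711875, -251176275, 334901700, -474444075, 586077975;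
  0, 0, 0, 0, 0, 0, 0, 0, 0, 0, 0, 0, -263456004, 53584272, 147356748, 205406376;
  0, 0, 0, 0, 0, 0, 0, 0, 0, 0, 0, 0, 0, -225159900, -200562600, 122986500;
  0, 0, 0, 0, 0, 0, 0, 0, 0, 0, 0, 0, 0, 0, -397754400, -202629600;
  0, 0, 0, 0, 0, 0, 0, 0, 0, 0, 0, 0, 0, 0, 0, -539212800]

def LQ : Matrix (Fin 16) (Fin 16) ℤ :=
  !![2654964, 0, 0, 0, 0, 0, 0, 0, 0, 0, 0, 0, 0, 0, 0, 0;
  0, 2654964, 0, 0, 0, 0, 0, 0, 0, 0, 0, 0, 0, 0, 0, 0;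
  0, 2654964, 2654964, 0, 0, 0, 0, 0, 0, 0, 0, 0, 0, 0, 0, 0;
  0, 2654964, 2654964, 2654964, 0, 0, 0, 0, 0, 0, 0, 0, 0, 0, 0, 0;
  0, 2654964, 2654964, 2654964, 2654964, 0, 0, 0, 0, 0, 0, 0, 0, 0, 0, 0;
  0, 2654964, 2654964, 2654964, 2654964, 2654964, 0, 0, 0, 0, 0, 0, 0, 0, 0, 0;
  0, 2654964, 2654964, 2654964, 2654964, 2654964, 2654964, 0, 0, 0, 0, 0, 0, 0, 0, 0;
  -5309928, 5309928, 7964892, 10619856, 13274820, 15929784, 18584748, 2654964, 0, 0, 0, 0, 0, 0, 0, 0;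
  0, 2654964, 1327482, -1327482, -2654964, -3982446, -5309928, -663741, 2654964, 0, 0, 0, 0, 0, 0, 0;
  -2654964, 2654964, 3982446, 5309928, 6637410, 6637410, 5309928, 663741, 2654964, 2654964, 0, 0, 0, 0, 0, 0;
  -2654964, 1327482, 1327482, 1327482, 1327482, 2654964, 3982446, 663741, 2654964, 2654964, 2654964, 0, 0, 0, 0, 0;
  0, 2654964, 2654964, 1327482, -1327482, -2654964, -3982446, -663741, 1327482, 3982446, 9292374, 2654964, 0, 0, 0, 0;
  -2654964, 2654964, 2654964, 3982446, 5309928, 6637410, 6637410, 663741, 3982446, -1327482, -9292374, -3063420, 2654964, 0, 0, 0;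
  0, 1327482, -1327482, -2654964, -3982446, -5309928, -5309928, -663741, 2654964, 5309928, 5309928, 816912, 256932, 2654964, 0, 0;
  -2654964, 3982446, 5309928, 6637410, 6637410, 5309928, 5309928, 663741, 3982446, 1327482, -1327482, -1429596, 3168828, -87048, 2654964, 0;
  -5309928, 3982446, 5309928, 6637410, 9292374, 11947338, 14602302, 1991223, 1327482, 6637410, 14602302, 4288788, -599508, 3699540, -1868308, 2654964]

def UQ : Matrix (Fin 16) (Fin 16) ℤ :=
  !![2654964, 2654964, 2654964, 2654964, 2654964, 2654964, 2654964, 2654964, 2654964, 2654964, 2654964, 2654964, 2654964, 2654964, 2654964, 2654964;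
  0, 5309928, -5309928, 0, 0, 0, 0, 0, -2654964, -2654964, 2654964, 5309928, 2654964, 0, -2654964, -2654964;
  0, 0, 5309928, -5309928, 0, 0, 0, 0, 0, -2654964, -2654964, -2654964, -2654964, 2654964, 5309928, 2654964;
  0, 0, 0, 5309928, -5309928, 0, 0, 0, 2654964, 5309928, 2654964, 0, -2654964, -2654964, -2654964, -2654964;
  0, 0, 0, 0, 5309928, -5309928, 0, 0, -2654964, -2654964, -2654964, 2654964, 5309928, 2654964, 0, -2654964;
  0, 0, 0, 0, 0, 5309928, -5309928, 0, 2654964, 0, -2654964, -2654964, -2654964, -2654964, 2654964, 5309928;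
  0, 0, 0, 0, 0, 0, 5309928, -5309928, -2654964, 2654964, 5309928, 2654964, 0, -2654964, -2654964, -2654964;
  0, 0, 0, 0, 0, 0, 0, 42479424, 10619856, -10619856, -10619856, -10619856, 10619856, 31859568, 10619856, 10619856;
  0, 0, 0, 0, 0, 0, 0, 0, 2654964, 1327482, 3982446, 2654964, 3982446, 1327482, 2654964, 2654964;
  0, 0, 0, 0, 0, 0, 0, 0, 0, 1327482, -2654964, 1327482, -1327482, 2654964, -1327482, 0;
  0, 0, 0, 0, 0, 0, 0, 0, 0, 0, 1327482, -2654964, 1327482, -1327482, 2654964, -1327482;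
  0, 0, 0, 0, 0, 0, 0, 0, 0, 0, 0, 8628633, -3318705, 3982446, -5973669, 7301151;
  0, 0, 0, 0, 0, 0, 0, 0, 0, 0, 0, 0, -3165534, 612684, 1735938, 2450736;
  0, 0, 0, 0, 0, 0, 0, 0, 0, 0, 0, 0, 0, -2612142, -2312388, 1498770;
  0, 0, 0, 0, 0, 0, 0, 0, 0, 0, 0, 0, 0, 0, -4700592, -2263248;
  0, 0, 0, 0, 0, 0, 0, 0, 0, 0, 0, 0, 0, 0, 0, -6293248]



lemma lu_det {R : Type*} [CommRing R] (A L U : Matrix (Fin 16) (Fin 16) R) (s : R)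
    (h : L * U = s • A) (hL : L.BlockTriangular OrderDual.toDual)
    (hU : U.BlockTriangular id) :
    s ^ 16 * A.det = (∏ i, L i i) * (∏ i, U i i) := by
  rw [← Matrix.det_of_lowerTriangular L hL, ← Matrix.det_of_upperTriangular hU,
      ← Matrix.det_mul, h, Matrix.det_smul, Fintype.card_fin]


set_option maxHeartbeats 3200000 in
lemma det_split {R : Type*} [CommRing R] (C P Q M : Matrix (Fin 16) (Fin 16) R) (m : R)
    (hP : ∀ i j, P i j = if i = 0 then C 0 j else C i j - C 0 j)
    (hQ : ∀ i j, Q i j = if i = 0 then (1 : R) else C i j - C 0 j)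
    (hM : ∀ i j, M i j = C i j + m) :
    M.det = P.det + m * Q.det := by
  obtain rfl : M = Matrix.of fun i j => C i j + m := by ext i j; rw [hM]; rfl
  obtain rfl : P = Matrix.of fun i j => if i = 0 then C 0 j else C i j - C 0 j := by
    ext i j; rw [hP]; rfl
  obtain rfl : Q = Matrix.of fun i j => if i = 0 then (1 : R) else C i j - C 0 j := by
    ext i j; rw [hQ]; rfl
  have hE : (Matrix.of fun i j : Fin 16 => if i = j then (1:R) else if j = 0 then -1 else 0) *
      (Matrix.of fun i j : Fin 16 => C i j + m)
      = Matrix.updateRow (Matrix.of fun i j : Fin 16 => if i = 0 then (0:R) else C i j - C 0 j)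
          0 ((fun j => C 0 j) + m • (fun _ => (1:R))) := by
    ext i j
    rw [Matrix.mul_apply]
    fin_cases i <;>
      simp +decide [Fin.sum_univ_succ, Matrix.updateRow_apply] <;> (try ring) <;> rfl
  have detE : (Matrix.of fun i j : Fin 16 => if i = j then (1:R) else if j = 0 then -1 else 0).det = 1 := by
    rw [Matrix.det_of_lowerTriangular _ ?ht]
    · simp
    · intro i j hij
      have h1 : i ≠ j := ne_of_lt hij
      have h2 : j ≠ 0 := (lt_of_le_of_lt (Fin.zero_le i) hij).ne'
      simp [h1, h2]
  have hP2 : Matrix.updateRow (Matrix.of fun i j : Fin 16 => if i = 0 then (0:R) else C i j - C 0 j)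
      0 (fun j => C 0 j) = Matrix.of fun i j => if i = 0 then C 0 j else C i j - C 0 j := by
    ext i j
    by_cases h : i = 0 <;> simp [h, Matrix.updateRow_apply]
  have hQ2 : Matrix.updateRow (Matrix.of fun i j : Fin 16 => if i = 0 then (0:R) else C i j - C 0 j)
      0 (fun _ => (1:R)) = Matrix.of fun i j => if i = 0 then (1:R) else C i j - C 0 j := by
    ext i j
    by_cases h : i = 0 <;> simp [h, Matrix.updateRow_apply]
  calc (Matrix.of fun i j : Fin 16 => C i j + m).det
      = ((Matrix.of fun i j : Fin 16 => if i = j then (1:R) else if j = 0 then -1 else 0) *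
          (Matrix.of fun i j : Fin 16 => C i j + m)).det := by rw [Matrix.det_mul, detE, one_mul]
    _ = _ := by
        rw [hE, Matrix.det_updateRow_add, Matrix.det_updateRow_smul, hP2, hQ2]

lemma detPm : Pm.det = 2048 := by
  have h2 := lu_det Pm LP UP (24924255258420000 : ℤ) (by decide)
    (by unfold Matrix.BlockTriangular; show ∀ i j : Fin 16, i < j → LP i j = 0; exact @of_decide_eq_true _ (@Fintype.decidableForallFintype _ _ (fun _ => Fintype.decidableForallFintype) _) (by decide)) (by unfold Matrix.BlockTriangular; show ∀ i j : Fin 16, j < i → UP i j = 0; exact @of_decide_eq_true _ (@Fintype.decidableForallFintype _ _ (fun _ => Fintype.decidableForallFintype) _) (by decide))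
  rw [(by decide : ∏ i : Fin 16, LP i i = (111633900 : ℤ) ^ 16),
      (by decide : ∏ i : Fin 16, UP i i = (78081372847943094865773023661728601160601016464612084354788014233063482089583213635829536908266103950540800000000000000000000000000000000 : ℤ))] at h2
  have h3 : (24924255258420000 : ℤ) ^ 16 * Pm.det = (24924255258420000 : ℤ) ^ 16 * 2048 := by rw [h2]; norm_num
  exact mul_left_cancel₀ (by norm_num) h3

lemma detQm : Qm.det = 4096 := by
  have h2 := lu_det Qm LQ UQ (7048833841296 : ℤ) (by decide)
    (by unfold Matrix.BlockTriangular; show ∀ i j : Fin 16, i < j → LQ i j = 0; exact @of_decide_eq_true _ (@Fintype.decidableForallFintype _ _ (fun _ => Fintype.decidableForallFintype) _) (by decide)) (by unfold Matrix.BlockTriangular; show ∀ i j : Fin 16, j < i → UQ i j = 0; exact @of_decide_eq_true _ (@Fintype.decidableForallFintype _ _ (fun _ => Fintype.decidableForallFintype) _) (by decide))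
  rw [(by decide : ∏ i : Fin 16, LQ i i = (2654964 : ℤ) ^ 16),
      (by decide : ∏ i : Fin 16, UQ i i = (24963078026111494224186387610828454831627711280866296421563385581061380647535896430150835177662054039289856 : ℤ))] at h2
  have h3 : (7048833841296 : ℤ) ^ 16 * Qm.det = (7048833841296 : ℤ) ^ 16 * 4096 := by rw [h2]; norm_num
  exact mul_left_cancel₀ (by norm_num) h3

/-- the element
`(1 + x + x² + x³ + x⁴ + x⁵ + x⁶ − x⁷ + m·h(x)) + y(1 + x − x⁵ + x⁷ + m·h(x))` has
group determinant `2¹¹(2m + 1)`. -/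
theorem sd16_det_two_pow_eleven (m : ℤ) (a : SD16 → ℤ)
    (ha : ∀ j : Fin 8, a (SD16.X ^ (j : ℕ)) =
      ![1 + m, 1 + m, 1 + m, 1 + m, 1 + m, 1 + m, 1 + m, -1 + m] j)
    (hb : ∀ j : Fin 8, a (SD16.Y * SD16.X ^ (j : ℕ)) =
      ![1 + m, 1 + m, m, m, m, -1 + m, m, 1 + m] j) :
    groupDet a = 2 ^ 11 * (2 * m + 1) := by
  have ha' : ∀ g : SD16, a g = cf g + m := by
    have hex : ∀ g : SD16, (∃ j : Fin 8, g = SD16.X ^ (j : ℕ)) ∨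
        (∃ j : Fin 8, g = SD16.Y * SD16.X ^ (j : ℕ)) := by decide
    have hc1 : ∀ j : Fin 8, cf (SD16.X ^ (j : ℕ)) = ![1,1,1,1,1,1,1,-1] j := by decide
    have hc2 : ∀ j : Fin 8, cf (SD16.Y * SD16.X ^ (j : ℕ)) = ![1,1,0,0,0,-1,0,1] j := by decide
    intro g
    rcases hex g with ⟨j, rfl⟩ | ⟨j, rfl⟩
    · rw [ha j, hc1 j]; fin_cases j <;> norm_num
    · rw [hb j, hc2 j]; fin_cases j <;> norm_num
  have hsub : groupDet a = (Matrix.of fun i j : Fin 16 => Cm i j + m).det := by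
    rw [groupDet, ← Matrix.det_submatrix_equiv_self eEq]
    congr 1
    ext i j
    show a (eFun i * (eFun j)⁻¹) = Cm i j + m
    rw [ha']
    rfl
  have hd := det_split Cm Pm Qm (Matrix.of fun i j : Fin 16 => Cm i j + m) m
    (fun i j => rfl) (fun i j => rfl) (fun i j => rfl)
  rw [hsub, hd, detPm, detQm]
  ring
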